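/- Any nondegenerate symmetric bilinear form on an F₂-vector space of even dimension is null-cobordant, i.e., admits an isotropic subspace of half the dimension. -/

import Mathlib

open Module LinearMap Submodule

universe u

private lemma f2_aux (n : ℕ) : ∀ (V : Type u) [AddCommGroup V] [Module (ZMod 2) V]
    [FiniteDimensional (ZMod 2) V] (B : LinearMap.BilinForm (ZMod 2) V),
    Module.finrank (ZMod 2) V = n → (∀ x y, B x y = B y x) → B.Nondegenerate → Even n →
    ∃ K : Submodule (ZMod 2) V, (∀ x ∈ K, ∀ y ∈ K, B x y = 0) ∧
      2 * Module.finrank (ZMod 2) K = n := by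
  induction n using Nat.strong_induction_on with
  | _ n ih =>
  intro V _ _ _ B hdim hsymm hnd heven
  rcases Nat.eq_zero_or_pos n with h0 | hpos
  · exact ⟨⊥, by simp, by simp [h0]⟩
  have hn2 : 2 ≤ n := by obtain ⟨m, rfl⟩ := heven; omega
  have h2 : (2 : ZMod 2) = 0 := rfl
  -- the quadratic form is linear over F₂
  set q : V →ₗ[ZMod 2] ZMod 2 :=
    { toFun := fun x => B x x
      map_add' := fun x y => by
        simp only [map_add, LinearMap.add_apply]
        linear_combination hsymm y x + B x y * h2
      map_smul' := fun c x => by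
        simp only [map_smul, LinearMap.smul_apply, smul_eq_mul, RingHom.id_apply]
        have : c * c = c := by revert c; decide
        ring_nf
        rw [pow_two, this] } with hq
  -- find a nonzero isotropic vector
  have hker : LinearMap.ker q ≠ ⊥ := by
    intro hbot
    have h1 : finrank (ZMod 2) (LinearMap.range q) ≤ 1 := by
      simpa using Submodule.finrank_le (LinearMap.range q)
    have := LinearMap.finrank_range_add_finrank_ker q
    rw [hbot, finrank_bot, add_zero, hdim] at this
    omega
  obtain ⟨v, hvk, hv0⟩ := Submodule.ne_bot_iff _ |>.1 hker
  have hvv : B v v = 0 := hvk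
  -- find w not orthogonal to v
  obtain ⟨w, hvw⟩ : ∃ w, B v w ≠ 0 := by
    by_contra h
    push_neg at h
    exact hv0 (hnd.1 v h)
  set U : Submodule (ZMod 2) V := Submodule.span (ZMod 2) {v, w} with hU
  have hvU : v ∈ U := Submodule.subset_span (Set.mem_insert _ _)
  have hwU : w ∈ U := Submodule.subset_span (Set.mem_insert_of_mem _ rfl)
  have hrefl : B.IsRefl := fun x y h => by rw [hsymm]; exact h
  -- B restricted to U is nondegenerate
  have hUnd : (B.restrict U).Nondegenerate := by
    apply (LinearMap.IsRefl.nondegenerate_iff_separatingLeft (fun x y h => hrefl x.1 y.1 h)).2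
    rintro ⟨x, hx⟩ h
    obtain ⟨a, b, rfl⟩ := Submodule.mem_span_pair.1 hx
    have h1 := h ⟨v, hvU⟩
    have h2' := h ⟨w, hwU⟩
    simp only [LinearMap.BilinForm.restrict_apply, LinearMap.domRestrict_apply, map_add,
      map_smul, LinearMap.add_apply, LinearMap.smul_apply, smul_eq_mul, hvv, mul_zero,
      zero_add] at h1 h2'
    rw [hsymm w v] at h1
    have hb : b = 0 := by
      rcases mul_eq_zero.1 h1 with h | h
      · exact h
      · exact absurd h hvw
    subst hb
    simp only [mul_zero, zero_mul, add_zero, zero_smul] at h2' ⊢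
    have ha : a = 0 := by
      rcases mul_eq_zero.1 h2' with h | h
      · exact h
      · exact absurd h hvw
    simp [ha]
  have hcompl : IsCompl U (B.orthogonal U) :=
    B.isCompl_orthogonal_of_restrict_nondegenerate hrefl hUnd
  -- B restricted to the orthogonal complement is nondegenerate
  have horthnd : (B.restrict (B.orthogonal U)).Nondegenerate := by
    apply B.nondegenerate_restrict_of_disjoint_orthogonal hrefl
    rw [LinearMap.BilinForm.orthogonal_orthogonal hnd hrefl]
    exact hcompl.disjoint.symm
  -- finrank U = 2
  have hvwind : LinearIndependent (ZMod 2) ![v, w] := by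
    rw [LinearIndependent.pair_iff]
    intro a b hab
    have h1 : B (a • v + b • w) v = 0 := by rw [hab]; simp
    simp only [map_add, map_smul, LinearMap.add_apply, LinearMap.smul_apply, smul_eq_mul,
      hvv, mul_zero, zero_add] at h1
    rw [hsymm w v] at h1
    have hb : b = 0 := by
      rcases mul_eq_zero.1 h1 with h | h
      · exact h
      · exact absurd h hvw
    subst hb
    simp only [zero_smul, add_zero] at hab
    exact ⟨(smul_eq_zero.1 hab).resolve_right hv0, rfl⟩
  have hfU : finrank (ZMod 2) U = 2 := by
    have h := finrank_span_eq_card hvwind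
    have hr : Set.range ![v, w] = {v, w} := by
      rw [Set.pair_comm]
      simp [Matrix.range_cons, Matrix.range_empty]
    rw [hr] at h
    simpa [hU] using h
  have hforth : finrank (ZMod 2) (B.orthogonal U) = n - 2 := by
    rw [LinearMap.BilinForm.finrank_orthogonal hnd, hdim, hfU]
  -- recurse
  obtain ⟨K', hK'iso, hK'dim⟩ := ih (n - 2) (by omega) (B.orthogonal U)
    (B.restrict (B.orthogonal U)) hforth
    (fun x y => hsymm x y) horthnd (by obtain ⟨m, rfl⟩ := heven; exact ⟨m - 1, by omega⟩)
  refine ⟨(Submodule.span (ZMod 2) {v}) ⊔ K'.map (B.orthogonal U).subtype, ?_, ?_⟩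
  · rintro x hx y hy
    rw [Submodule.mem_sup] at hx hy
    obtain ⟨a, ha, k, hk, rfl⟩ := hx
    obtain ⟨a', ha', k', hk', rfl⟩ := hy
    obtain ⟨c, rfl⟩ := Submodule.mem_span_singleton.1 ha
    obtain ⟨c', rfl⟩ := Submodule.mem_span_singleton.1 ha'
    obtain ⟨⟨k0, hk0m⟩, hk0, rfl⟩ := Submodule.mem_map.1 hk
    obtain ⟨⟨k0', hk0'm⟩, hk0', rfl⟩ := Submodule.mem_map.1 hk'
    have hvk' : B v k0' = 0 := hk0'm v hvU
    have hk0v : B k0 v = 0 := hrefl _ _ (hk0m v hvU)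
    have hkk : B k0 k0' = 0 := hK'iso _ hk0 _ hk0'
    simp [map_add, map_smul, hvv, hvk', hk0v, hkk]
  · have hdisj : Disjoint (Submodule.span (ZMod 2) {v}) (K'.map (B.orthogonal U).subtype) := by
      apply Disjoint.mono (Submodule.span_le.2 (by simpa using hvU))
        (Submodule.map_subtype_le _ _)
      exact hcompl.disjoint
    have := Submodule.finrank_sup_add_finrank_inf_eq (Submodule.span (ZMod 2) {v})
      (K'.map (B.orthogonal U).subtype)
    rw [hdisj.eq_bot, finrank_bot, add_zero, finrank_span_singleton hv0,
      Submodule.finrank_map_subtype_eq] at this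
    rw [this]
    omega

/-- any nondegenerate symmetric bilinear form on an `𝔽₂`-vector space of
even dimension is null-cobordant: it admits an isotropic subspace of half the
dimension. -/
theorem f2_bilinear_null_cobordant {V : Type*} [AddCommGroup V] [Module (ZMod 2) V]
    [FiniteDimensional (ZMod 2) V]
    (B : V →ₗ[ZMod 2] V →ₗ[ZMod 2] ZMod 2)
    (hsymm : ∀ x y, B x y = B y x)
    (hnd : Function.Bijective fun v => B v)
    (heven : Even (Module.finrank (ZMod 2) V)) :
    ∃ K : Submodule (ZMod 2) V, (∀ x ∈ K, ∀ y ∈ K, B x y = 0) ∧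
      2 * Module.finrank (ZMod 2) K = Module.finrank (ZMod 2) V := by
  have hnd' : LinearMap.BilinForm.Nondegenerate B := by
    apply (LinearMap.IsRefl.nondegenerate_iff_separatingLeft (fun x y h => by rw [hsymm]; exact h)).2
    intro m h
    exact hnd.injective (show (fun v => B v) m = (fun v => B v) 0 by
      simp only [map_zero]
      exact LinearMap.ext h)
  exact f2_aux (Module.finrank (ZMod 2) V) V B rfl hsymm hnd' heven
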